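/- arXiv:2303.10664 — 2 statements merged into one kernel-verified Lean document; each statement's English description precedes it below -/
import Mathlib

section
/- For every positive integer n, the sum over all partitions λ of n of (-1)^{ℓ(λ)} ∏_{i}(1 - t^{λ_i}) / z_λ equals t^n - t^{n-1}, where ℓ(λ) is the number of parts of λ. -/
open MvPolynomial
open scoped Classical

noncomputable section

abbrev PosNat := {k : ℕ // 0 < k}

variable {R : Type} [CommRing R] [Algebra ℚ R]

/-- The power sum `p_k`, modeled as the variable `X k` of a polynomial ring. -/
def pp (k : ℕ) : MvPolynomial PosNat R := if h : 0 < k then X ⟨k, h⟩ else 1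

/-- `p_λ = p_{λ_1} p_{λ_2} ⋯` for a multiset of parts. -/
def pProd (μ : Multiset ℕ) : MvPolynomial PosNat R := (μ.map pp).prod

/-- `∏_i m_i(λ)!`. -/
def aut (μ : Multiset ℕ) : ℚ := ∏ i ∈ μ.toFinset, (Nat.factorial (μ.count i))

/-- `z_λ = ∏ i^{m_i(λ)} m_i(λ)!`. -/
def zed (μ : Multiset ℕ) : ℚ := (μ.map (fun i => (i : ℚ))).prod * aut μ

/-- partial derivative `∂/∂p_k`. -/
def pd (k : ℕ) : MvPolynomial PosNat R → MvPolynomial PosNat R :=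
  if h : 0 < k then fun f => pderiv ⟨k, h⟩ f else id

def derivList (l : List ℕ) (f : MvPolynomial PosNat R) : MvPolynomial PosNat R :=
  l.foldr (fun k g => pd k g) f

/-- the degree `-i` component of `exp(-∑_{n≥1} (∂/∂p_n) z^{-n})`. -/
def Dop (i : ℕ) (f : MvPolynomial PosNat R) : MvPolynomial PosNat R :=
  ∑ μ : i.Partition,
    algebraMap ℚ _ ((-1) ^ (Multiset.card μ.parts) / aut μ.parts) *
      derivList μ.parts.toList f

/-- weighted degree with `p_k` of weight `k`. -/
def wdeg (f : MvPolynomial PosNat R) : ℕ :=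
  f.weightedTotalDegree (fun k : PosNat => (k : ℕ))

/-- one-row Hall–Littlewood `q_m = ∑_{λ⊢m} p_λ / z_λ(t)`. -/
def qrow (t : R) (m : ℕ) : MvPolynomial PosNat R :=
  ∑ μ : m.Partition,
    algebraMap ℚ _ (zed μ.parts)⁻¹ * C ((μ.parts.map (fun k => 1 - t ^ k)).prod) *
      pProd μ.parts

/-- complete homogeneous `h_m = ∑_{λ⊢m} p_λ / z_λ`. -/
def hrow (m : ℕ) : MvPolynomial PosNat R :=
  ∑ μ : m.Partition, algebraMap ℚ _ (zed μ.parts)⁻¹ * pProd μ.parts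

/-- one-row Schur Q-function `Q_m = ∑_{λ⊢m, parts odd} 2^{ℓ(λ)} p_λ / z_λ`. -/
def qqrow (m : ℕ) : MvPolynomial PosNat R :=
  ∑ μ : m.Partition,
    if ∀ k ∈ μ.parts, Odd k then
      algebraMap ℚ _ (2 ^ (Multiset.card μ.parts) / zed μ.parts) * pProd μ.parts
    else 0

/-- the Hall–Littlewood vertex operator component `H_m`. -/
def Hop (t : R) (m : ℕ) (f : MvPolynomial PosNat R) : MvPolynomial PosNat R :=
  ∑ i ∈ Finset.range (wdeg f + 1), qrow t (m + i) * Dop i f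

/-- the Hall–Littlewood function `Q_μ(x;t) = H_{μ_1} ⋯ H_{μ_l}.1`. -/
def HLQ (t : R) (l : List ℕ) : MvPolynomial PosNat R := l.foldr (Hop t) 1

/-- the Schur Q-function vertex operator component `Q_m`. -/
def Qop (m : ℕ) (f : MvPolynomial PosNat R) : MvPolynomial PosNat R :=
  ∑ i ∈ Finset.range (wdeg f + 1), qqrow (m + i) * Dop i f

/-- the Schur Q-function `Q_ξ = Q_{ξ_1} ⋯ Q_{ξ_l}.1` for a strict partition `ξ`. -/
def SchurQ (l : List ℕ) : MvPolynomial PosNat R := l.foldr Qop 1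

def hInt (m : ℤ) : MvPolynomial PosNat R := if 0 ≤ m then hrow m.toNat else 0

/-- the Schur function via the Jacobi–Trudi determinant. -/
def schur (l : List ℕ) : MvPolynomial PosNat R :=
  Matrix.det (Matrix.of fun i j : Fin l.length => hInt ((l.get i : ℤ) - (i : ℤ) + (j : ℤ)))

/-- `b_μ(t) = ∏_i ∏_{j=1}^{m_i(μ)} (1 - t^j)`, so that `Q_μ(x;t) = b_μ(t) P_μ(x;t)`. -/
def bPol (t : R) (μ : Multiset ℕ) : R :=
  ∏ i ∈ μ.toFinset, ∏ j ∈ Finset.Icc 1 (μ.count i), (1 - t ^ j)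

/-- the decreasing list of parts of a partition. -/
def ofPart {n : ℕ} (μ : n.Partition) : List ℕ := (μ.parts.sort (· ≤ ·)).reverse

def toPart {n : ℕ} (l : List ℕ) (hpos : ∀ x ∈ l, 0 < x) (hsum : l.sum = n) : n.Partition :=
  ⟨(l : Multiset ℕ), fun {i} hi => hpos i hi, by simpa using hsum⟩

/-- `n(μ) = ∑ (i-1) μ_i` (0-indexed). -/
def nstat (l : List ℕ) : ℕ := ∑ i ∈ Finset.range l.length, i * l.getD i 0

/-- dominance order: `a ≥ b`. -/
def Dom (a b : List ℕ) : Prop := a.sum = b.sum ∧ ∀ k, (b.take k).sum ≤ (a.take k).sum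

abbrev F := RatFunc ℚ

def tF : F := RatFunc.X

/-- Hall–Littlewood `P_μ(x;t) = b_μ(t)⁻¹ Q_μ(x;t)` over `ℚ(t)`. -/
def Pfun {n : ℕ} (μ : n.Partition) : MvPolynomial PosNat F :=
  C (bPol tF μ.parts)⁻¹ * HLQ tF (ofPart μ)

/-! ### Auxiliary development for STATEMENT 1 -/

namespace SpinAux1

lemma prod_count_factorial_insert (a : ℕ) (s : Multiset ℕ) :
    ∏ i ∈ insert a s.toFinset, ((s.count i).factorial : ℚ) = aut s := by
  by_cases h : a ∈ s.toFinset
  · rw [Finset.insert_eq_self.2 h, aut]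
  · rw [Finset.prod_insert h, aut]
    have : s.count a = 0 := by
      rw [Multiset.count_eq_zero]; simpa [Multiset.mem_toFinset] using h
    simp [this]

lemma aut_cons (a : ℕ) (s : Multiset ℕ) :
    aut (a ::ₘ s) = ((s.count a : ℚ) + 1) * aut s := by
  have ha : a ∈ insert a s.toFinset := Finset.mem_insert_self a _
  have h1 : aut (a ::ₘ s)
      = (((s.count a + 1).factorial : ℚ)) *
        ∏ i ∈ (insert a s.toFinset).erase a, ((s.count i).factorial : ℚ) := by
    rw [aut, Multiset.toFinset_cons, ← Finset.mul_prod_erase _ _ ha,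
        Multiset.count_cons_self]
    congr 1
    refine Finset.prod_congr rfl fun i hi => ?_
    rw [Multiset.count_cons_of_ne (Finset.ne_of_mem_erase hi)]
  have h2 : aut s
      = ((s.count a).factorial : ℚ) *
        ∏ i ∈ (insert a s.toFinset).erase a, ((s.count i).factorial : ℚ) := by
    rw [← prod_count_factorial_insert a s, ← Finset.mul_prod_erase _ _ ha]
  have h3 : ((s.count a + 1).factorial : ℚ)
      = ((s.count a : ℚ) + 1) * ((s.count a).factorial : ℚ) := by
    rw [Nat.factorial_succ]; push_cast; ring
  rw [h1, h3, h2]; ring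

lemma zed_eq (μ : Multiset ℕ) :
    zed μ = (μ.map (fun a : ℕ => (a : ℚ))).prod * aut μ := by
  rw [zed]
  congr 2
  rw [Multiset.map_id']
  show μ.bind (fun a => {(a : ℚ)}) = _
  rw [Multiset.bind_singleton]

lemma zed_cons (a : ℕ) (s : Multiset ℕ) :
    zed (a ::ₘ s) = (a : ℚ) * ((s.count a : ℚ) + 1) * zed s := by
  rw [zed_eq, zed_eq, aut_cons, Multiset.map_cons, Multiset.prod_cons]
  ring

lemma zed_pos (s : Multiset ℕ) (h : ∀ x ∈ s, 0 < x) : 0 < zed s := by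
  induction s using Multiset.induction with
  | empty => simp [zed_eq, aut]
  | cons a s ih =>
    rw [zed_cons]
    have ha : (0 : ℚ) < a := by
      exact_mod_cast h a (Multiset.mem_cons_self a s)
    have hc : (0 : ℚ) < (s.count a : ℚ) + 1 := by positivity
    exact mul_pos (mul_pos ha hc)
      (ih fun x hx => h x (Multiset.mem_cons_of_mem hx))

/-- the summand, as a function of the multiset of parts. -/
def tm (s : Multiset ℕ) : F :=
  (-1 : F) ^ (Multiset.card s) *
    ((s.map (fun i => 1 - tF ^ i)).prod / algebraMap ℚ F (zed s))

/-- the full sum over partitions of `n`. -/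
def S (n : ℕ) : F := ∑ μ : n.Partition, tm μ.parts

lemma tm_cons (k : ℕ) (hk : 0 < k) (s : Multiset ℕ) (hs : ∀ x ∈ s, 0 < x) :
    algebraMap ℚ F ((k : ℚ) * ((s.count k : ℚ) + 1)) * tm (k ::ₘ s)
      = -(1 - tF ^ k) * tm s := by
  have hz : zed s ≠ 0 := (zed_pos s hs).ne'
  have hkc : ((k : ℚ) * ((s.count k : ℚ) + 1)) ≠ 0 := by
    have : (0 : ℚ) < k := by exact_mod_cast hk
    positivity
  have hAz : algebraMap ℚ F (zed s) ≠ 0 := by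
    intro h
    exact hz ((map_eq_zero_iff _ (algebraMap ℚ F).injective).mp h)
  have hAk : algebraMap ℚ F ((k : ℚ) * ((s.count k : ℚ) + 1)) ≠ 0 := by
    intro h
    exact hkc ((map_eq_zero_iff _ (algebraMap ℚ F).injective).mp h)
  have hA1 : algebraMap ℚ F (k : ℚ) ≠ 0 := by
    intro h
    have : ((k : ℚ)) = 0 := (map_eq_zero_iff _ (algebraMap ℚ F).injective).mp h
    exact (by positivity : (0:ℚ) < (k:ℚ)).ne' this
  have hA2 : algebraMap ℚ F ((s.count k : ℚ) + 1) ≠ 0 := by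
    intro h
    have : ((s.count k : ℚ) + 1) = 0 := (map_eq_zero_iff _ (algebraMap ℚ F).injective).mp h
    exact (by positivity : (0:ℚ) < (s.count k : ℚ) + 1).ne' this
  have hA2' : algebraMap ℚ F (1 + (s.count k : ℚ)) ≠ 0 := by
    intro h
    have : (1 + (s.count k : ℚ)) = 0 := (map_eq_zero_iff _ (algebraMap ℚ F).injective).mp h
    exact (by positivity : (0:ℚ) < 1 + (s.count k : ℚ)).ne' this
  have key : ∀ (a z x y : F), a ≠ 0 → a * (y * (x / (a * z))) = y * (x / z) := by
    intro a z x y ha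
    have h1 : a * (y * (x / (a * z))) = y * (a * x / (a * z)) := by ring
    rw [h1, mul_div_mul_left x z ha]
  rw [tm, tm, Multiset.map_cons, Multiset.prod_cons, Multiset.card_cons,
      zed_cons, pow_succ]
  simp only [map_mul]
  rw [key _ _ _ _ (mul_ne_zero hA1 hA2)]
  ring

lemma S_zero : S 0 = 1 := by
  rw [S]
  rw [Finset.sum_eq_single_of_mem (default : Nat.Partition 0) (Finset.mem_univ _)
    (fun b _ hb => absurd (Subsingleton.elim b default) hb)]
  simp [tm, zed_eq, aut]

/-- removing one part `k` from a partition of `n`. -/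
def erasePart {n : ℕ} (μ : n.Partition) (k : ℕ) (hk : k ∈ μ.parts) :
    (n - k).Partition :=
  ⟨μ.parts.erase k, fun {i} hi => μ.parts_pos (Multiset.mem_of_mem_erase hi), by
    have h := μ.parts_sum
    rw [← Multiset.cons_erase hk, Multiset.sum_cons] at h
    omega⟩

/-- adding a part `k` to a partition of `n - k`. -/
def consPart {n k : ℕ} (hk1 : 0 < k) (hk2 : k ≤ n) (ν : (n - k).Partition) :
    n.Partition :=
  ⟨k ::ₘ ν.parts, fun {i} hi => by
      rcases Multiset.mem_cons.mp hi with h | h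
      · exact h ▸ hk1
      · exact ν.parts_pos h, by
    rw [Multiset.sum_cons, ν.parts_sum]
    omega⟩

lemma S_rec (n : ℕ) (hn : 0 < n) :
    (n : F) * S n
      = ∑ k ∈ Finset.Icc 1 n, (-(1 - tF ^ k)) * S (n - k) := by
  classical
  have key : ∀ μ : n.Partition, (n : F) * tm μ.parts
      = ∑ k ∈ μ.parts.toFinset,
          (-(1 - tF ^ k)) * tm (μ.parts.erase k) := by
    intro μ
    have hsum : ∑ i ∈ μ.parts.toFinset, μ.parts.count i * i = n := by
      conv_rhs => rw [← μ.parts_sum]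
      rw [Finset.sum_multiset_count]
      simp [smul_eq_mul]
    have hn' : (n : F) = ∑ i ∈ μ.parts.toFinset,
        algebraMap ℚ F ((i : ℚ) * ((μ.parts.count i : ℚ))) := by
      rw [← map_sum]
      have : (∑ i ∈ μ.parts.toFinset, (i : ℚ) * (μ.parts.count i : ℚ))
          = ((∑ i ∈ μ.parts.toFinset, μ.parts.count i * i : ℕ) : ℚ) := by
        push_cast; exact Finset.sum_congr rfl fun i _ => by ring
      rw [this, hsum]
      rw [map_natCast]
    rw [hn', Finset.sum_mul]
    refine Finset.sum_congr rfl fun k hk => ?_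
    have hkmem : k ∈ μ.parts := Multiset.mem_toFinset.mp hk
    have hkpos : 0 < k := μ.parts_pos hkmem
    have hcons : μ.parts = k ::ₘ μ.parts.erase k := (Multiset.cons_erase hkmem).symm
    have hcount : (μ.parts.count k : ℚ) = ((μ.parts.erase k).count k : ℚ) + 1 := by
      rw [hcons, Multiset.count_cons_self]
      push_cast
      simp [Multiset.erase_cons_head]
    rw [hcount]
    conv_lhs => rw [hcons]
    rw [Multiset.erase_cons_head]
    exact tm_cons k hkpos (μ.parts.erase k)
      (fun x hx => μ.parts_pos (Multiset.mem_of_mem_erase hx))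
  rw [S, Finset.mul_sum]
  rw [Finset.sum_congr rfl fun μ _ => key μ]
  rw [Finset.sum_comm' (t' := Finset.Icc 1 n)
    (s' := fun k => Finset.univ.filter (fun μ : n.Partition => k ∈ μ.parts)) ?_]
  · refine Finset.sum_congr rfl fun k hk => ?_
    have hk1 : 1 ≤ k := (Finset.mem_Icc.mp hk).1
    have hk2 : k ≤ n := (Finset.mem_Icc.mp hk).2
    rw [S, Finset.mul_sum]
    refine Finset.sum_nbij'
      (i := fun μ => if h : k ∈ μ.parts then erasePart μ k h else default)
      (j := fun ν => consPart hk1 hk2 ν) ?_ ?_ ?_ ?_ ?_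
    · intro μ _; exact Finset.mem_univ _
    · intro ν _
      simp only [Finset.mem_filter, Finset.mem_univ, true_and]
      exact Multiset.mem_cons_self _ _
    · intro μ hμ
      have hkm : k ∈ μ.parts := (Finset.mem_filter.mp hμ).2
      rw [dif_pos hkm]
      apply Nat.Partition.ext
      simp [consPart, erasePart, Multiset.cons_erase hkm]
    · intro ν _
      have hkm : k ∈ (consPart hk1 hk2 ν).parts := Multiset.mem_cons_self _ _
      rw [dif_pos hkm]
      apply Nat.Partition.ext
      simp [consPart, erasePart, Multiset.erase_cons_head]
    · intro μ hμ
      have hkm : k ∈ μ.parts := (Finset.mem_filter.mp hμ).2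
      rw [dif_pos hkm]
      rfl
  · intro μ k
    simp only [Finset.mem_univ, true_and, Finset.mem_filter, Multiset.mem_toFinset,
      Finset.mem_Icc]
    constructor
    · intro hk
      refine ⟨hk, μ.parts_pos hk, ?_⟩
      rw [← μ.parts_sum]
      exact Multiset.le_sum_of_mem hk
    · intro hk
      exact hk.1

/-- the closed form. -/
def fcl (m : ℕ) : F := if m = 0 then 1 else tF ^ m - tF ^ (m - 1)

lemma sum_fcl (n : ℕ) (hn : 0 < n) :
    ∑ k ∈ Finset.Icc 1 n, (-(1 - tF ^ k)) * fcl (n - k)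
      = (n : F) * (tF ^ n - tF ^ (n - 1)) := by
  induction n with
  | zero => omega
  | succ n ih =>
    rcases Nat.eq_zero_or_pos n with h0 | hpos
    · subst h0
      rw [Finset.Icc_self, Finset.sum_singleton]
      norm_num [fcl]
    · rw [show n + 1 = n + 1 from rfl]
      rw [Finset.sum_Icc_succ_top (by omega : 1 ≤ n + 1)]
      have hstep : ∀ k ∈ Finset.Icc 1 n,
          (-(1 - tF ^ k)) * fcl (n + 1 - k)
            = (-(1 - tF ^ k)) * (tF * fcl (n - k)) +
              (-(1 - tF ^ k)) * (if k = n then -1 else 0) := by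
        intro k hk
        have hk1 : 1 ≤ k := (Finset.mem_Icc.mp hk).1
        have hk2 : k ≤ n := (Finset.mem_Icc.mp hk).2
        rcases eq_or_lt_of_le hk2 with heq | hlt
        · subst heq
          have e1 : k + 1 - k = 1 := by omega
          have e2 : k - k = 0 := by omega
          rw [e1, e2]
          simp only [fcl]
          norm_num
          ring
        · have h1 : n + 1 - k ≠ 0 := by omega
          have h2 : n - k ≠ 0 := by omega
          obtain ⟨m, hm⟩ : ∃ m, n - k = m + 1 := ⟨n - k - 1, by omega⟩
          have e1 : n + 1 - k = m + 2 := by omega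
          rw [fcl, fcl, if_neg h1, if_neg h2, if_neg (by omega : ¬ k = n), e1, hm]
          rw [show m + 2 - 1 = m + 1 by omega, show m + 1 - 1 = m by omega]
          rw [pow_succ, pow_succ]
          ring
      rw [Finset.sum_congr rfl hstep, Finset.sum_add_distrib]
      have hb : ∑ k ∈ Finset.Icc 1 n,
          (-(1 - tF ^ k)) * (if k = n then (-1 : F) else 0) = 1 - tF ^ n := by
        rw [Finset.sum_eq_single_of_mem n (Finset.mem_Icc.mpr ⟨hpos, le_refl n⟩)]
        · simp
        · intro b _ hb; simp [hb]
      have ha : ∑ k ∈ Finset.Icc 1 n, (-(1 - tF ^ k)) * (tF * fcl (n - k))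
          = tF * ((n : F) * (tF ^ n - tF ^ (n - 1))) := by
        rw [← ih hpos, Finset.mul_sum]
        exact Finset.sum_congr rfl fun k _ => by ring
      rw [ha, hb]
      have hfz : fcl (n + 1 - (n + 1)) = 1 := by simp [fcl]
      rw [hfz]
      have hn1 : (n : F) * tF ^ (n - 1) * tF = (n : F) * tF ^ n := by
        rw [mul_assoc, ← pow_succ]
        congr 2
        omega
      have e4 : n + 1 - 1 = n := by omega
      rw [e4]
      push_cast
      linear_combination (-1 : F) * hn1

lemma S_eq_fcl : ∀ n : ℕ, S n = fcl n := by
  intro n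
  induction n using Nat.strong_induction_on with
  | _ n ih =>
    rcases Nat.eq_zero_or_pos n with h0 | hpos
    · subst h0; rw [S_zero, fcl]; simp
    · have hrec := S_rec n hpos
      have : ∑ k ∈ Finset.Icc 1 n, (-(1 - tF ^ k)) * S (n - k)
          = ∑ k ∈ Finset.Icc 1 n, (-(1 - tF ^ k)) * fcl (n - k) := by
        refine Finset.sum_congr rfl fun k hk => ?_
        have hk1 : 1 ≤ k := (Finset.mem_Icc.mp hk).1
        rw [ih (n - k) (by omega)]
      rw [this, sum_fcl n hpos] at hrec
      have hne : (n : F) ≠ 0 := by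
        rw [← map_natCast (algebraMap ℚ F) n]
        intro h
        have h2 : ((n : ℚ)) = 0 := (map_eq_zero_iff _ (algebraMap ℚ F).injective).mp h
        have h3 : n = 0 := by exact_mod_cast h2
        exact hpos.ne' h3
      have := mul_left_cancel₀ hne hrec
      rw [this, fcl, if_neg hpos.ne']

end SpinAux1

/-- `∑_{λ⊢n} (-1)^{ℓ(λ)}/z_λ(t) = t^n - t^{n-1}` in `ℚ(t)` for `n ≥ 1`. -/
theorem spin_sum_inv_zt_signed (n : ℕ) (hn : 0 < n) :
    ∑ μ : n.Partition,
      ((-1 : F) ^ (Multiset.card μ.parts) *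
        ((μ.parts.map (fun i => 1 - tF ^ i)).prod / algebraMap ℚ F (zed μ.parts)))
      = tF ^ n - tF ^ (n - 1) := by
  have h := SpinAux1.S_eq_fcl n
  rw [SpinAux1.S, SpinAux1.fcl, if_neg hn.ne'] at h
  exact h
end
end

section
/- Let λ = (λ₁, λ₂, 2^{m₂}, 1^{m₁}) be a double-hook partition that is not a hook (λ₂ ≥ 2, m₂ ≥ 0). Then N^{(s)}(λ) = 0 if 0 ≤ s ≤ m₂ - 1 or s ≥ m₁ + m₂ + 2; N^{(s)}(λ) = 1 if s = m₂ or s = m₁ + m₂ + 1; and N^{(s)}(λ) = 2 if m₂ + 1 ≤ s ≤ m₁ + m₂. -/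
open MvPolynomial
open scoped Classical

noncomputable section

variable {R : Type} [CommRing R] [Algebra ℚ R]

def IsHookL (l : List ℕ) : Prop := l ≠ [] ∧ ∀ x ∈ l.tail, x = 1

def VStrip (ρ ν : List ℕ) : Prop :=
  ∀ i, ρ.getD i 0 ≤ ν.getD i 0 ∧ ν.getD i 0 ≤ ρ.getD i 0 + 1

def Ncount (s : ℤ) (ν : List ℕ) : ℕ :=
  Nat.card {ρ : List ℕ // ρ.Pairwise (· ≥ ·) ∧ (∀ x ∈ ρ, 0 < x) ∧ IsHookL ρ ∧
    (ρ.sum : ℤ) + s = (ν.sum : ℤ) ∧ VStrip ρ ν}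

lemma getD_rep (n i x : ℕ) : (List.replicate n x).getD i 0 = if i < n then x else 0 := by
  rw [List.getD_eq_getElem?_getD, List.getElem?_replicate]
  split_ifs <;> simp

lemma getD_hook (a b i : ℕ) : ((a :: List.replicate b 1).getD i 0) =
    if i = 0 then a else if i ≤ b then 1 else 0 := by
  cases i with
  | zero => simp
  | succ j =>
    rw [List.getD_cons_succ, getD_rep]
    split_ifs <;> first | contradiction | omega

lemma getD_nu (lam2 m2 m1 i : ℕ) :
    ((lam2 :: (List.replicate m2 2 ++ List.replicate m1 1)).getD i 0) =
      if i = 0 then lam2 else if i ≤ m2 then 2 else if i ≤ m2 + m1 then 1 else 0 := by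
  cases i with
  | zero => simp
  | succ j =>
    rw [List.getD_cons_succ]
    rcases lt_or_ge j m2 with h | h
    · rw [List.getD_append _ _ _ _ (by simpa using h), getD_rep]
      split_ifs <;> first | contradiction | omega
    · rw [List.getD_append_right _ _ _ _ (by simpa using h), getD_rep]
      simp only [List.length_replicate]
      split_ifs <;> first | contradiction | omega

lemma sorted_rep_ge (a b : ℕ) (ha : 1 ≤ a) : (a :: List.replicate b 1).Pairwise (· ≥ ·) := by
  rw [List.pairwise_cons]
  constructor
  · intro x hx; rw [List.eq_of_mem_replicate hx]; exact ha
  · induction b with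
    | zero => simp
    | succ n ih =>
      rw [List.replicate_succ, List.pairwise_cons]
      exact ⟨fun x hx => le_of_eq (List.eq_of_mem_replicate hx), ih⟩

lemma hook_char (lam2 m2 m1 : ℕ) (h2 : 2 ≤ lam2) (s : ℤ) (ρ : List ℕ) :
    (ρ.Pairwise (· ≥ ·) ∧ (∀ x ∈ ρ, 0 < x) ∧ IsHookL ρ ∧
      (ρ.sum : ℤ) + s = (((lam2 :: (List.replicate m2 2 ++ List.replicate m1 1)) : List ℕ).sum : ℤ) ∧
      VStrip ρ (lam2 :: (List.replicate m2 2 ++ List.replicate m1 1)))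
    ↔ ∃ a b : ℕ, ρ = a :: List.replicate b 1 ∧ (a = lam2 ∨ a + 1 = lam2) ∧
        m2 ≤ b ∧ b ≤ m2 + m1 ∧ (a : ℤ) + b + s = lam2 + 2 * m2 + m1 := by
  constructor
  · rintro ⟨hsort, hpos, ⟨hne, htail⟩, hsum, hstrip⟩
    obtain ⟨a, l, rfl⟩ : ∃ a l, ρ = a :: l := by
      cases ρ with
      | nil => exact absurd rfl hne
      | cons a l => exact ⟨a, l, rfl⟩
    have hl : l = List.replicate l.length 1 := List.eq_replicate_length.mpr htail
    rw [show (a :: l) = a :: List.replicate l.length 1 from by rw [← hl]] at hsum hstrip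
    refine ⟨a, l.length, by rw [← hl], ?_, ?_, ?_, ?_⟩
    · have h0 := hstrip 0
      rw [getD_hook, getD_nu] at h0
      split_ifs at h0 <;> first | contradiction | omega
    · have h1 := (hstrip m2).2
      rw [getD_hook, getD_nu] at h1
      split_ifs at h1 <;> first | contradiction | omega
    · have h1 := (hstrip (m2 + m1 + 1)).1
      rw [getD_hook, getD_nu] at h1
      split_ifs at h1 <;> first | contradiction | omega
    · simp only [List.sum_cons, List.sum_append, List.sum_replicate, smul_eq_mul] at hsum
      push_cast at hsum
      omega
  · rintro ⟨a, b, rfl, ha, hb1, hb2, hsum⟩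
    have ha1 : 1 ≤ a := by omega
    refine ⟨sorted_rep_ge a b ha1, ?_, ⟨List.cons_ne_nil _ _, ?_⟩, ?_, ?_⟩
    · intro x hx
      rcases List.mem_cons.mp hx with rfl | hx
      · omega
      · rw [List.eq_of_mem_replicate hx]; omega
    · intro x hx
      exact List.eq_of_mem_replicate hx
    · simp only [List.sum_cons, List.sum_append, List.sum_replicate, smul_eq_mul]
      push_cast
      omega
    · intro i
      rw [getD_hook, getD_nu]
      constructor <;> (split_ifs <;> first | contradiction | omega)

/-- for the double hook `λ = (λ₁, λ₂, 2^{m₂}, 1^{m₁})` with `λ₂ ≥ 2`,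
`N^{(s)}(λ)` is `0` for `s ≤ m₂-1` or `s ≥ m₁+m₂+2`, `1` for `s = m₂` or `s = m₁+m₂+1`,
and `2` for `m₂+1 ≤ s ≤ m₁+m₂`. -/
theorem Ncount_double_hook (lam1 lam2 m2 m1 : ℕ) (h12 : lam2 ≤ lam1) (h2 : 2 ≤ lam2)
    (s : ℕ) (hs : s ≤ lam2 + 2 * m2 + m1) :
    (s + 1 ≤ m2 ∨ m1 + m2 + 2 ≤ s →
      Ncount (s : ℤ) (lam2 :: (List.replicate m2 2 ++ List.replicate m1 1)) = 0)
    ∧ ((s = m2 ∨ s = m1 + m2 + 1) →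
      Ncount (s : ℤ) (lam2 :: (List.replicate m2 2 ++ List.replicate m1 1)) = 1)
    ∧ (m2 + 1 ≤ s ∧ s ≤ m1 + m2 →
      Ncount (s : ℤ) (lam2 :: (List.replicate m2 2 ++ List.replicate m1 1)) = 2) := by
  have key := hook_char lam2 m2 m1 h2 (s : ℤ)
  refine ⟨?_, ?_, ?_⟩
  · intro hcase
    unfold Ncount
    rw [Nat.card_eq_zero]
    left
    refine ⟨fun x => ?_⟩
    obtain ⟨a, b, _, ha, hb1, hb2, hsum⟩ := (key x.1).mp x.2
    omega
  · intro hcase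
    unfold Ncount
    rw [Nat.card_eq_one_iff_exists]
    rcases hcase with h | h
    · refine ⟨⟨lam2 :: List.replicate (m2 + m1) 1,
        (key _).mpr ⟨lam2, m2 + m1, rfl, Or.inl rfl, Nat.le_add_right _ _, le_rfl, by omega⟩⟩, ?_⟩
      rintro ⟨ρ, hρ⟩
      obtain ⟨a, b, hab, ha, hb1, hb2, hsb⟩ := (key ρ).mp hρ
      have e1 : a = lam2 := by omega
      have e2 : b = m2 + m1 := by omega
      apply Subtype.ext
      show ρ = _
      rw [hab, e1, e2]
    · refine ⟨⟨(lam2 - 1) :: List.replicate m2 1,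
        (key _).mpr ⟨lam2 - 1, m2, rfl, Or.inr (by omega), le_rfl, Nat.le_add_right _ _, by omega⟩⟩, ?_⟩
      rintro ⟨ρ, hρ⟩
      obtain ⟨a, b, hab, ha, hb1, hb2, hsb⟩ := (key ρ).mp hρ
      have e1 : a = lam2 - 1 := by omega
      have e2 : b = m2 := by omega
      apply Subtype.ext
      show ρ = _
      rw [hab, e1, e2]
  · rintro ⟨hlo, hhi⟩
    unfold Ncount
    rw [Nat.card_eq_two_iff]
    refine ⟨⟨lam2 :: List.replicate (2 * m2 + m1 - s) 1,
        (key _).mpr ⟨lam2, 2 * m2 + m1 - s, rfl, Or.inl rfl, by omega, by omega, by omega⟩⟩,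
      ⟨(lam2 - 1) :: List.replicate (2 * m2 + m1 - s + 1) 1,
        (key _).mpr ⟨lam2 - 1, 2 * m2 + m1 - s + 1, rfl, Or.inr (by omega), by omega, by omega, by omega⟩⟩,
      ?_, ?_⟩
    · intro h
      have h' := congrArg Subtype.val h
      simp only [List.cons.injEq] at h'
      omega
    · rw [Set.eq_univ_iff_forall]
      rintro ⟨ρ, hρ⟩
      obtain ⟨a, b, hab, ha, hb1, hb2, hsb⟩ := (key ρ).mp hρ
      simp only [Set.mem_insert_iff, Set.mem_singleton_iff]
      rcases ha with h | h
      · left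
        have e2 : b = 2 * m2 + m1 - s := by omega
        exact Subtype.ext (show ρ = _ from by rw [hab, h, e2])
      · right
        have e1 : a = lam2 - 1 := by omega
        have e2 : b = 2 * m2 + m1 - s + 1 := by omega
        exact Subtype.ext (show ρ = _ from by rw [hab, e1, e2])
end
end
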